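/- Let G(z) = Σ_{n≥0} z^n/(2n+1) (analytic on the unit disk 𝔻) and P(z) = 1 + (8/π²) z G(z)². Then the function Q(z) = 2z P'(z) + 1 − P(z)², analytic on 𝔻, has all Taylor coefficients about z = 0 nonnegative (real and ≥ 0). -/

import Mathlib

open Complex Finset FormalMultilinearSeries
open scoped Nat NNReal ENNReal

noncomputable section QucAux

namespace Quc

/-- coefficients of `G` -/
def gR (n : ℕ) : ℝ := (2 * (n : ℝ) + 1)⁻¹

/-- coefficients of `S(z) = z G(z)^2` -/
def sR : ℕ → ℝ
  | 0 => 0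
  | n + 1 => ∑ p ∈ Finset.HasAntidiagonal.antidiagonal n, gR p.1 * gR p.2

def cR : ℝ := 8 / Real.pi ^ 2

/-- coefficients of `ψ(w) = √w sinh (2√w)` -/
def βR (k : ℕ) : ℝ := 2 ^ (2 * k + 1) / (2 * k + 1)!

def δR : ℕ → ℝ
  | 0 => 2 * cR
  | 1 => cR ^ 2
  | _ + 2 => 0

/-- coefficients of `Φ` -/
def γR : ℕ → ℝ
  | 0 => 0
  | k + 1 => cR * βR k - δR k

def GC (z : ℂ) : ℂ := ∑' n : ℕ, z ^ n / (2 * n + 1)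
def SC (z : ℂ) : ℂ := z * GC z ^ 2
def VC (w : ℂ) : ℂ := ∑' n : ℕ, w ^ (2 * n + 1) / (2 * n + 1)
def ψC (w : ℂ) : ℂ := ∑' k : ℕ, (βR k : ℂ) * w ^ (k + 1)
def ΦC (w : ℂ) : ℂ := ∑' k : ℕ, (γR k : ℂ) * w ^ k

def pS : FormalMultilinearSeries ℂ ℂ ℂ := ofScalars ℂ fun n => (sR n : ℂ)
def pΦ : FormalMultilinearSeries ℂ ℂ ℂ := ofScalars ℂ fun n => (γR n : ℂ)

lemma gR_nonneg (n : ℕ) : 0 ≤ gR n := by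
  have : (0:ℝ) < 2 * n + 1 := by positivity
  exact le_of_lt (by simpa [gR] using inv_pos.mpr this)

lemma gR_le_one (n : ℕ) : gR n ≤ 1 := by
  rw [gR, inv_le_one_iff₀]
  right; nlinarith [Nat.cast_nonneg (α := ℝ) n]

lemma two_n_one_ne (n : ℕ) : (2 * (n : ℂ) + 1) ≠ 0 := by
  have : ((2 * n + 1 : ℕ) : ℂ) ≠ 0 := Nat.cast_ne_zero.mpr (by omega)
  push_cast at this
  convert this using 2

lemma cast_gR (n : ℕ) : (gR n : ℂ) = (2 * (n : ℂ) + 1)⁻¹ := by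
  rw [gR]; push_cast; rfl

lemma summable_norm_g {z : ℂ} (hz : ‖z‖ < 1) :
    Summable fun n => ‖(gR n : ℂ) * z ^ n‖ := by
  refine Summable.of_nonneg_of_le (fun n => norm_nonneg _) (fun n => ?_)
    (summable_geometric_of_lt_one (norm_nonneg z) hz)
  rw [norm_mul, norm_pow]
  have h1 : ‖((gR n : ℝ) : ℂ)‖ ≤ 1 := by
    rw [Complex.norm_real, Real.norm_eq_abs, _root_.abs_of_nonneg (gR_nonneg n)]
    exact gR_le_one n
  calc ‖((gR n : ℝ) : ℂ)‖ * ‖z‖ ^ n ≤ 1 * ‖z‖ ^ n := by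
        exact mul_le_mul_of_nonneg_right h1 (by positivity)
  _ = ‖z‖ ^ n := one_mul _

lemma GC_eq {z : ℂ} (hz : ‖z‖ < 1) : GC z = ∑' n : ℕ, (gR n : ℂ) * z ^ n := by
  rw [GC]
  exact tsum_congr fun n => by rw [cast_gR, div_eq_mul_inv, mul_comm]

lemma sR_nonneg (n : ℕ) : 0 ≤ sR n := by
  match n with
  | 0 => simp [sR]
  | n + 1 =>
    rw [sR]
    exact Finset.sum_nonneg fun p _ => mul_nonneg (gR_nonneg _) (gR_nonneg _)

lemma sR_le (n : ℕ) : sR n ≤ n := by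
  match n with
  | 0 => simp [sR]
  | n + 1 =>
    rw [sR]
    calc ∑ p ∈ Finset.HasAntidiagonal.antidiagonal n, gR p.1 * gR p.2
        ≤ ∑ _p ∈ Finset.HasAntidiagonal.antidiagonal n, (1:ℝ) := by
          refine Finset.sum_le_sum fun p _ => ?_
          nlinarith [gR_le_one p.1, gR_le_one p.2, gR_nonneg p.1, gR_nonneg p.2]
    _ = ((n+1 : ℕ) : ℝ) := by simp [Finset.Nat.card_antidiagonal]
    _ ≤ ((n+1 : ℕ) : ℝ) := le_refl _

lemma summable_s {z : ℂ} (hz : ‖z‖ < 1) : Summable fun n => (sR n : ℂ) * z ^ n := by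
  have hb : Summable fun n : ℕ => (n : ℝ) ^ 1 * ‖z‖ ^ n :=
    summable_pow_mul_geometric_of_norm_lt_one 1 (by simpa using hz)
  refine Summable.of_norm_bounded hb fun n => ?_
  rw [norm_mul, norm_pow, Complex.norm_real, Real.norm_eq_abs, _root_.abs_of_nonneg (sR_nonneg n),
    pow_one]
  have := sR_le n
  have h2 : (0:ℝ) ≤ ‖z‖ ^ n := by positivity
  nlinarith

lemma SC_eq {z : ℂ} (hz : ‖z‖ < 1) : SC z = ∑' n : ℕ, (sR n : ℂ) * z ^ n := by
  have hs2 : Summable fun n => ‖(gR n : ℂ) * z ^ n‖ := summable_norm_g hz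
  have hC := tsum_mul_tsum_eq_tsum_sum_antidiagonal_of_summable_norm hs2 hs2
  have hin : ∀ n : ℕ, (∑ p ∈ Finset.HasAntidiagonal.antidiagonal n,
      ((gR p.1 : ℂ) * z ^ p.1) * ((gR p.2 : ℂ) * z ^ p.2)) = (sR (n+1) : ℂ) * z ^ n := by
    intro n
    rw [sR]
    push_cast
    rw [Finset.sum_mul]
    refine Finset.sum_congr rfl fun p hp => ?_
    have hpn : p.1 + p.2 = n := Finset.HasAntidiagonal.mem_antidiagonal.mp hp
    rw [← hpn, pow_add]
    ring
  rw [SC, GC_eq hz, sq, hC, tsum_congr hin]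
  rw [Summable.tsum_eq_zero_add (summable_s hz), ← tsum_mul_left]
  have h0 : (sR 0 : ℂ) * z ^ 0 = 0 := by simp [sR]
  rw [h0, zero_add]
  exact (tsum_congr fun n => by ring).symm

lemma mem_ball_iff {y : ℂ} {r : ℝ≥0} :
    y ∈ EMetric.ball (0 : ℂ) (r : ℝ≥0∞) ↔ ‖y‖ < (r : ℝ) := by
  rw [EMetric.ball, Metric.mem_eball, edist_zero_right]
  exact_mod_cast Iff.rfl

lemma hSball : HasFPowerSeriesOnBall SC pS 0 ((2⁻¹ : ℝ≥0) : ℝ≥0∞) := by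
  have hb : ∀ n : ℕ, ‖pS n‖ * ((2⁻¹ : ℝ≥0) : ℝ) ^ n ≤ 2 := by
    intro n
    have h1 : ‖pS n‖ = |sR n| := by
      rw [pS, ofScalars_norm, Complex.norm_real, Real.norm_eq_abs]
    rw [h1, _root_.abs_of_nonneg (sR_nonneg n)]
    have h2 : (n : ℝ) ≤ 2 ^ n := by exact_mod_cast (@Nat.lt_two_pow_self n).le
    have h3 : sR n ≤ (n:ℝ) := sR_le n
    have h4 : ((2⁻¹ : ℝ≥0) : ℝ) = 2⁻¹ := by norm_num
    rw [h4]
    have h5 : (0:ℝ) < (2:ℝ)⁻¹ ^ n := by positivity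
    have h6 : (2:ℝ)⁻¹ ^ n * 2 ^ n = 1 := by
      rw [← mul_pow]; norm_num
    nlinarith [sR_nonneg n]
  have hr : ((2⁻¹ : ℝ≥0) : ℝ≥0∞) ≤ pS.radius := pS.le_radius_of_bound 2 hb
  have hpos : (0 : ℝ≥0∞) < ((2⁻¹ : ℝ≥0) : ℝ≥0∞) := by
    simp
  have H := (pS.hasFPowerSeriesOnBall (lt_of_lt_of_le hpos hr)).mono hpos hr
  refine H.congr fun y hy => ?_
  have hy' : ‖y‖ < 1 := by
    have := mem_ball_iff.mp hy
    have h4 : ((2⁻¹ : ℝ≥0) : ℝ) = 2⁻¹ := by norm_num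
    rw [h4] at this
    linarith
  have : pS.sum y = ∑' n : ℕ, (sR n : ℂ) • y ^ n := ofScalars_sum_eq _ y
  rw [this, SC_eq hy']
  exact tsum_congr fun n => by rw [smul_eq_mul]

lemma SC_diff {z : ℂ} (hz : ‖z‖ < 2⁻¹) : DifferentiableAt ℂ SC z := by
  have h := hSball.analyticOnNhd
  have hz' : z ∈ EMetric.ball (0 : ℂ) ((2⁻¹ : ℝ≥0) : ℝ≥0∞) := by
    have h4 : ((2⁻¹ : ℝ≥0) : ℝ) = 2⁻¹ := by norm_num
    rw [mem_ball_iff, h4]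
    exact hz
  exact (h z hz').differentiableAt

lemma VC_hasDeriv {w : ℂ} (hw : ‖w‖ < 2⁻¹) : HasDerivAt VC ((1 - w ^ 2)⁻¹) w := by
  have hd : ∀ (n : ℕ) (y : ℂ),
      HasDerivAt (fun u : ℂ => u ^ (2*n+1) / (2*(n:ℂ)+1)) (y ^ (2*n)) y := by
    intro n y
    have h := (hasDerivAt_pow (2*n+1) y).div_const (2*(n:ℂ)+1)
    have hne := two_n_one_ne n
    convert h using 1 <;> try with_reducible_and_instances rfl
    push_cast
    field_simp
  have hsum : Summable fun n : ℕ => (4⁻¹ : ℝ) ^ n :=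
    summable_geometric_of_lt_one (by norm_num) (by norm_num)
  have hmain := hasDerivAt_tsum_of_isPreconnected hsum
    (Metric.isOpen_ball (x := (0:ℂ)) (ε := 2⁻¹))
    ((convex_ball (0:ℂ) 2⁻¹).isPreconnected)
    (fun n y _ => hd n y)
    (g' := fun n y => y ^ (2*n)) ?_ (Metric.mem_ball_self (by norm_num)) ?_
    (by rw [Metric.mem_ball, dist_zero_right]; exact hw)
  · have heq : (∑' n : ℕ, w ^ (2*n)) = (1 - w^2)⁻¹ := by
      rw [tsum_congr fun n => pow_mul w 2 n]
      exact tsum_geometric_of_norm_lt_one (by rw [norm_pow]; nlinarith [norm_nonneg w])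
    rw [← heq]
    exact hmain
  · intro n y hy
    rw [Metric.mem_ball, dist_zero_right] at hy
    rw [norm_pow, pow_mul]
    refine pow_le_pow_left₀ (by positivity) ?_ n
    nlinarith [norm_nonneg y]
  · have : (fun n : ℕ => (0:ℂ) ^ (2*n+1) / (2*(n:ℂ)+1)) = fun _ => 0 := by
      funext n; simp
    rw [this]
    exact summable_zero

lemma VC_zero : VC 0 = 0 := by
  have : ∀ n : ℕ, (0:ℂ) ^ (2*n+1) / (2*(n:ℂ)+1) = 0 := fun n => by simp
  rw [VC, tsum_congr this, tsum_zero]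

lemma one_sub_ne {w : ℂ} (hw : ‖w‖ < 1) : 1 - w ≠ 0 := by
  intro h
  rw [sub_eq_zero] at h
  rw [← h] at hw
  simp at hw

lemma one_add_ne {w : ℂ} (hw : ‖w‖ < 1) : 1 + w ≠ 0 := by
  intro h
  have : w = -1 := by linear_combination h
  rw [this] at hw
  simp at hw

lemma exp_VC {w : ℂ} (hw : ‖w‖ < 2⁻¹) : exp (2 * VC w) * (1 - w) = 1 + w := by
  set D : ℂ → ℂ := fun w => exp (2 * VC w) * ((1 - w) / (1 + w)) with hD
  have hball : ∀ x : ℂ, x ∈ Metric.ball (0:ℂ) 2⁻¹ → ‖x‖ < 2⁻¹ := by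
    intro x hx; rwa [Metric.mem_ball, dist_zero_right] at hx
  have hDd : ∀ x ∈ Metric.ball (0:ℂ) 2⁻¹, HasDerivAt D 0 x := by
    intro x hx
    have hx' := hball x hx
    have hx1 : ‖x‖ < 1 := hx'.trans (by norm_num)
    have hne1 := one_sub_ne hx1
    have hne2 := one_add_ne hx1
    have hne3 : (1:ℂ) - x^2 ≠ 0 := by
      have := mul_ne_zero hne1 hne2
      intro h
      apply this
      linear_combination h
    have h1 : HasDerivAt (fun u => 2 * VC u) (2 * (1 - x^2)⁻¹) x :=
      (VC_hasDeriv hx').const_mul 2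
    have h2 : HasDerivAt (fun u => exp (2 * VC u))
        (exp (2 * VC x) * (2 * (1 - x^2)⁻¹)) x := h1.cexp
    have h3 : HasDerivAt (fun u : ℂ => (1 - u) / (1 + u)) (-2 / (1 + x)^2) x := by
      have ha : HasDerivAt (fun u : ℂ => 1 - u) (-1) x := by
        simpa using (hasDerivAt_id x).const_sub 1
      have hb : HasDerivAt (fun u : ℂ => 1 + u) 1 x := by
        simpa using (hasDerivAt_id x).const_add 1
      have := ha.div hb hne2
      convert this using 1 <;> try with_reducible_and_instances rfl
      field_simp
      try ring
    have hprod := h2.mul h3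
    have halg : exp (2 * VC x) * (2 * (1 - x^2)⁻¹) * ((1-x)/(1+x))
        + exp (2 * VC x) * (-2 / (1+x)^2) = 0 := by
      rw [show (1:ℂ) - x^2 = (1-x)*(1+x) by ring]
      field_simp
      ring
    convert hprod using 1 <;> try with_reducible_and_instances rfl
    exact halg.symm
  have hconv : Convex ℝ (Metric.ball (0:ℂ) 2⁻¹) := convex_ball _ _
  have hdiff : DifferentiableOn ℂ D (Metric.ball (0:ℂ) 2⁻¹) := fun x hx =>
    (hDd x hx).differentiableAt.differentiableWithinAt
  have hzero : ∀ x ∈ Metric.ball (0:ℂ) 2⁻¹,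
      fderivWithin ℂ D (Metric.ball (0:ℂ) 2⁻¹) x = 0 := by
    intro x hx
    rw [fderivWithin_of_isOpen Metric.isOpen_ball hx, (hDd x hx).hasFDerivAt.fderiv]
    ext y
    simp
  have hmem : w ∈ Metric.ball (0:ℂ) 2⁻¹ := by
    rw [Metric.mem_ball, dist_zero_right]; exact hw
  have hmem0 : (0:ℂ) ∈ Metric.ball (0:ℂ) 2⁻¹ := Metric.mem_ball_self (by norm_num)
  have hc := hconv.is_const_of_fderivWithin_eq_zero hdiff hzero hmem hmem0
  have hD0 : D 0 = 1 := by
    rw [hD]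
    simp [VC_zero]
  rw [hD0] at hc
  have hw1 : ‖w‖ < 1 := hw.trans (by norm_num)
  have hne2 := one_add_ne hw1
  simp only [hD] at hc
  field_simp at hc
  linear_combination hc

lemma sinh_VC {w : ℂ} (hw : ‖w‖ < 2⁻¹) :
    Complex.sinh (2 * VC w) = 2 * w * (1 - w ^ 2)⁻¹ := by
  have h := exp_VC hw
  have hw1 : ‖w‖ < 1 := hw.trans (by norm_num)
  have hne1 := one_sub_ne hw1
  have hne2 := one_add_ne hw1
  have hne3 : (1:ℂ) - w^2 ≠ 0 := by
    have := mul_ne_zero hne1 hne2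
    intro hh; apply this; linear_combination hh
  have hexp : exp (2 * VC w) = (1 + w) / (1 - w) := by
    rw [eq_div_iff hne1]; exact h
  have hexpneg : exp (-(2 * VC w)) = (1 - w) / (1 + w) := by
    rw [Complex.exp_neg, hexp, inv_div]
  show (exp (2 * VC w) - exp (-(2 * VC w))) / 2 = 2 * w * (1 - w ^ 2)⁻¹
  rw [hexp, hexpneg]
  field_simp
  ring

lemma VC_eq_mul (u : ℂ) : VC u = u * GC (u ^ 2) := by
  rw [VC, GC, ← tsum_mul_left]
  exact tsum_congr fun n => by
    rw [← pow_mul]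
    ring

lemma SC_sq (u : ℂ) : SC (u ^ 2) = VC u ^ 2 := by
  rw [SC, VC_eq_mul]
  ring

lemma fact_cast_ne (m : ℕ) : ((m ! : ℕ) : ℂ) ≠ 0 :=
  Nat.cast_ne_zero.mpr (Nat.factorial_ne_zero m)

lemma psi_sq (v : ℂ) : ψC (v ^ 2) = v * Complex.sinh (2 * v) := by
  rw [ψC, Complex.sinh_eq_tsum, ← tsum_mul_left]
  refine tsum_congr fun k => ?_
  have hne := fact_cast_ne (2 * k + 1)
  rw [βR]
  push_cast
  rw [mul_pow, ← pow_mul]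
  field_simp
  ring

lemma psi_zero : ψC 0 = 0 := by
  have : ∀ k : ℕ, (βR k : ℂ) * (0:ℂ) ^ (k+1) = 0 := fun k => by simp
  rw [ψC, tsum_congr this, tsum_zero]

lemma key {z : ℂ} (hz : ‖z‖ < 4⁻¹) : 2 * z * deriv SC z = ψC (SC z) := by
  rcases eq_or_ne z 0 with rfl | hz0
  · simp [show SC 0 = 0 by simp [SC], psi_zero]
  · set w := z ^ ((2:ℕ)⁻¹ : ℂ) with hw
    have hw2 : w ^ 2 = z := Complex.cpow_nat_inv_pow z two_ne_zero
    have hwn : ‖w‖ < 2⁻¹ := by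
      have h2 : ‖w‖ ^ 2 = ‖z‖ := by rw [← norm_pow, hw2]
      nlinarith [norm_nonneg w]
    have hz2 : ‖z‖ < 2⁻¹ := hz.trans (by norm_num)
    have hd1 : HasDerivAt (fun u : ℂ => SC (u ^ 2)) (deriv SC (w ^ 2) * (2 * w)) w := by
      have hS : HasDerivAt SC (deriv SC (w ^ 2)) (w ^ 2) := by
        refine (SC_diff ?_).hasDerivAt
        rw [hw2]; exact hz2
      have hp : HasDerivAt (fun u : ℂ => u ^ 2) (2 * w) w := by
        simpa using hasDerivAt_pow 2 w
      exact hS.comp w hp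
    have hd2 : HasDerivAt (fun u : ℂ => SC (u ^ 2)) (2 * VC w * (1 - w ^ 2)⁻¹) w := by
      have hV := VC_hasDeriv hwn
      have hsq : HasDerivAt (fun u : ℂ => VC u ^ 2) (2 * VC w * (1 - w ^ 2)⁻¹) w := by
        have := hV.pow 2
        norm_num at this
        convert this using 1 <;> try with_reducible_and_instances rfl
        try ring
      exact hsq.congr_of_eventuallyEq (Filter.Eventually.of_forall fun u => SC_sq u)
    have huniq : deriv SC (w ^ 2) * (2 * w) = 2 * VC w * (1 - w ^ 2)⁻¹ :=
      hd1.unique hd2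
    calc 2 * z * deriv SC z = w * (deriv SC (w ^ 2) * (2 * w)) := by
          rw [← hw2]; ring
    _ = w * (2 * VC w * (1 - w ^ 2)⁻¹) := by rw [huniq]
    _ = VC w * (2 * w * (1 - w ^ 2)⁻¹) := by ring
    _ = VC w * Complex.sinh (2 * VC w) := by rw [sinh_VC hwn]
    _ = ψC (VC w ^ 2) := (psi_sq (VC w)).symm
    _ = ψC (SC z) := by rw [← SC_sq, hw2]

lemma cR_pos : 0 < cR := by
  have := Real.pi_pos
  rw [cR]; positivity

lemma cR_le : cR ≤ 4 / 3 := by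
  have h := Real.pi_gt_three
  rw [cR, div_le_div_iff₀ (by nlinarith) (by norm_num)]
  nlinarith

lemma four_pow_le_fact (k : ℕ) : (4 : ℕ) ^ k ≤ (2 * k + 1)! := by
  induction k with
  | zero => simp
  | succ k ih =>
    have h1 : 2 * (k + 1) + 1 = (2 * k + 1) + 2 := by ring
    have h2 : ((2 * k + 1) + 2)! = (2 * k + 1)! * (((2 * k + 1) + 2) * ((2 * k + 1) + 1)) := by
      rw [Nat.factorial_succ, Nat.factorial_succ]
      ring
    rw [h1, h2, pow_succ]
    exact Nat.mul_le_mul ih (by nlinarith)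

lemma βR_nonneg (k : ℕ) : 0 ≤ βR k := by
  rw [βR]; positivity

lemma βR_le_two (k : ℕ) : βR k ≤ 2 := by
  rw [βR, div_le_iff₀ (by positivity)]
  have h : (4 : ℝ) ^ k ≤ (2 * k + 1)! := by exact_mod_cast Nat.cast_le.mpr (four_pow_le_fact k)
  calc (2:ℝ) ^ (2*k+1) = 2 * 4 ^ k := by
        rw [pow_succ, pow_mul]
        norm_num
        ring
  _ ≤ 2 * (2*k+1)! := by nlinarith

lemma δR_nonneg (k : ℕ) : 0 ≤ δR k := by
  have := cR_pos
  match k with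
  | 0 => rw [δR]; positivity
  | 1 => rw [δR]; positivity
  | (k+2) => rw [δR]

lemma βR_zero : βR 0 = 2 := by norm_num [βR]

lemma βR_one : βR 1 = 4 / 3 := by norm_num [βR, Nat.factorial]

lemma γR_nonneg (k : ℕ) : 0 ≤ γR k := by
  have hc := cR_pos
  have hc' := cR_le
  match k with
  | 0 => rw [γR]
  | 1 => rw [γR, βR_zero, δR]; linarith
  | 2 => rw [γR, βR_one, δR]; nlinarith
  | (k+3) =>
    rw [γR, show δR (k+2) = 0 from rfl]
    have := βR_nonneg (k+2)
    nlinarith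

lemma γR_le_three (k : ℕ) : γR k ≤ 3 := by
  have hc := cR_pos
  have hc' := cR_le
  match k with
  | 0 => rw [γR]; norm_num
  | (k+1) =>
    rw [γR]
    have h1 := βR_le_two k
    have h2 := βR_nonneg k
    have h3 := δR_nonneg k
    nlinarith

lemma summable_psi {w : ℂ} (hw : ‖w‖ < 1) :
    Summable fun k => (βR k : ℂ) * w ^ (k + 1) := by
  have hb : Summable fun k : ℕ => 2 * ‖w‖ ^ (k+1) := by
    have := (summable_geometric_of_lt_one (norm_nonneg w) hw).mul_left (2 * ‖w‖)
    refine this.congr fun k => ?_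
    rw [pow_succ]
    ring
  refine Summable.of_norm_bounded hb fun k => ?_
  rw [norm_mul, norm_pow, Complex.norm_real, Real.norm_eq_abs,
    _root_.abs_of_nonneg (βR_nonneg k)]
  have h1 := βR_le_two k
  have h2 : (0:ℝ) ≤ ‖w‖ ^ (k+1) := by positivity
  nlinarith

lemma summable_gamma {w : ℂ} (hw : ‖w‖ < 1) :
    Summable fun k => (γR k : ℂ) * w ^ k := by
  have hb : Summable fun k : ℕ => 3 * ‖w‖ ^ k :=
    (summable_geometric_of_lt_one (norm_nonneg w) hw).mul_left 3
  refine Summable.of_norm_bounded hb fun k => ?_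
  rw [norm_mul, norm_pow, Complex.norm_real, Real.norm_eq_abs,
    _root_.abs_of_nonneg (γR_nonneg k)]
  have h1 := γR_le_three k
  have h2 : (0:ℝ) ≤ ‖w‖ ^ k := by positivity
  nlinarith

lemma δR_eq_zero {k : ℕ} (hk : 2 ≤ k) : δR k = 0 := by
  match k, hk with
  | (k+2), _ => rw [δR]

lemma ΦC_eq {w : ℂ} (hw : ‖w‖ < 1) :
    ΦC w = (cR : ℂ) * ψC w - 2 * (cR : ℂ) * w - (cR : ℂ) ^ 2 * w ^ 2 := by
  have hterm : ∀ k : ℕ, (γR (k+1) : ℂ) * w ^ (k+1)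
      = (cR : ℂ) * ((βR k : ℂ) * w ^ (k+1)) - (δR k : ℂ) * w ^ (k+1) := by
    intro k
    rw [γR]
    push_cast
    ring
  have hA : Summable fun k => (cR : ℂ) * ((βR k : ℂ) * w ^ (k+1)) :=
    (summable_psi hw).mul_left _
  have hB : Summable fun k => (δR k : ℂ) * w ^ (k+1) := by
    refine summable_of_ne_finset_zero (s := {0, 1}) fun k hk => ?_
    have hk2 : 2 ≤ k := by
      simp only [Finset.mem_insert, Finset.mem_singleton] at hk
      omega
    rw [δR_eq_zero hk2]
    simp
  have hδ : (∑' k : ℕ, (δR k : ℂ) * w ^ (k+1))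
      = 2 * (cR : ℂ) * w + (cR : ℂ) ^ 2 * w ^ 2 := by
    rw [tsum_eq_sum (s := {0, 1}) (fun k hk => by
      have hk2 : 2 ≤ k := by
        simp only [Finset.mem_insert, Finset.mem_singleton] at hk
        omega
      rw [δR_eq_zero hk2]; simp)]
    rw [Finset.sum_insert (by norm_num), Finset.sum_singleton]
    rw [show δR 0 = 2 * cR from rfl, show δR 1 = cR ^ 2 from rfl]
    push_cast
    ring
  rw [ΦC, Summable.tsum_eq_zero_add (summable_gamma hw)]
  rw [show (γR 0 : ℂ) = 0 by rw [γR]; simp, zero_mul, zero_add]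
  rw [tsum_congr hterm, Summable.tsum_sub hA hB, tsum_mul_left, hδ, ψC]
  ring

lemma hΦball : HasFPowerSeriesOnBall ΦC pΦ 0 ((1 : ℝ≥0) : ℝ≥0∞) := by
  have hb : ∀ n : ℕ, ‖pΦ n‖ * ((1 : ℝ≥0) : ℝ) ^ n ≤ 3 := by
    intro n
    have h1 : ‖pΦ n‖ = |γR n| := by
      rw [pΦ, ofScalars_norm, Complex.norm_real, Real.norm_eq_abs]
    rw [h1, _root_.abs_of_nonneg (γR_nonneg n)]
    simpa using γR_le_three n
  have hr : ((1 : ℝ≥0) : ℝ≥0∞) ≤ pΦ.radius := pΦ.le_radius_of_bound 3 hb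
  have hpos : (0 : ℝ≥0∞) < ((1 : ℝ≥0) : ℝ≥0∞) := by simp
  have H := (pΦ.hasFPowerSeriesOnBall (lt_of_lt_of_le hpos hr)).mono hpos hr
  refine H.congr fun y hy => ?_
  have : pΦ.sum y = ∑' n : ℕ, (γR n : ℂ) • y ^ n := ofScalars_sum_eq _ y
  rw [this, ΦC]
  exact tsum_congr fun n => by rw [smul_eq_mul]

lemma comp_coeff (n : ℕ) :
    ∃ r : ℝ, 0 ≤ r ∧ (pΦ.comp pS) n (fun _ => 1) = (r : ℂ) := by
  classical
  refine ⟨∑ c : Composition n, γR c.length * ∏ i, sR (c.blocksFun i), ?_, ?_⟩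
  · refine Finset.sum_nonneg fun c _ => ?_
    exact mul_nonneg (γR_nonneg _) (Finset.prod_nonneg fun i _ => sR_nonneg _)
  · rw [show (pΦ.comp pS) n = ∑ c : Composition n, pΦ.compAlongComposition pS c from rfl]
    rw [ContinuousMultilinearMap.sum_apply]
    push_cast
    refine Finset.sum_congr rfl fun c _ => ?_
    rw [compAlongComposition_apply]
    have hvec : pS.applyComposition c (fun _ => 1) = fun i => ((sR (c.blocksFun i) : ℝ) : ℂ) := by
      funext i
      rw [FormalMultilinearSeries.applyComposition]
      have : ((fun _ => 1) ∘ c.embedding i : Fin (c.blocksFun i) → ℂ) = fun _ => 1 := rfl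
      rw [this, pS, ofScalars_apply_eq]
      simp
    rw [hvec, pΦ, ofScalars]
    simp only [ContinuousMultilinearMap.smul_apply, ContinuousMultilinearMap.mkPiAlgebraFin_apply]
    rw [List.prod_ofFn]
    rw [smul_eq_mul, ← Complex.ofReal_prod]
    try push_cast
    try ring

lemma SC_norm {z : ℂ} (hz : ‖z‖ < 4⁻¹) : ‖SC z‖ < 1 := by
  have hz1 : ‖z‖ < 1 := hz.trans (by norm_num)
  have hG : ‖GC z‖ ≤ 4 / 3 := by
    rw [GC_eq hz1]
    have h1 : ‖∑' n : ℕ, (gR n : ℂ) * z ^ n‖ ≤ ∑' n : ℕ, ‖(gR n : ℂ) * z ^ n‖ :=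
      norm_tsum_le_tsum_norm (summable_norm_g hz1)
    have h2 : (∑' n : ℕ, ‖(gR n : ℂ) * z ^ n‖) ≤ ∑' n : ℕ, (4⁻¹ : ℝ) ^ n := by
      refine Summable.tsum_le_tsum (fun n => ?_) (summable_norm_g hz1)
        (summable_geometric_of_lt_one (by norm_num) (by norm_num))
      rw [norm_mul, norm_pow, Complex.norm_real, Real.norm_eq_abs,
        _root_.abs_of_nonneg (gR_nonneg n)]
      have ha := gR_le_one n
      have hb : ‖z‖ ^ n ≤ (4⁻¹:ℝ) ^ n := pow_le_pow_left₀ (norm_nonneg z) hz.le n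
      have hc : (0:ℝ) ≤ ‖z‖ ^ n := by positivity
      have hd : (0:ℝ) ≤ (4⁻¹:ℝ) ^ n := by positivity
      nlinarith [gR_nonneg n]
    have h3 : (∑' n : ℕ, (4⁻¹ : ℝ) ^ n) = 4 / 3 := by
      rw [tsum_geometric_of_lt_one (by norm_num) (by norm_num)]
      norm_num
    linarith
  rw [SC, norm_mul, norm_pow]
  nlinarith [norm_nonneg (GC z), norm_nonneg z]

end Quc

end QucAux

/-- Let `G(z) = Σ_{n≥0} zⁿ/(2n+1)` and `P(z) = 1 + (8/π²) z G(z)²` (the Ma–Minda–Rønning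
function for uniformly convex functions). Then `Q(z) = 2z P'(z) + 1 - P(z)²` has all
Taylor coefficients about `0` real and nonnegative; equivalently, all iterated
derivatives at `0` are nonnegative reals. -/
theorem Quc_coeff_nonneg
    (G : ℂ → ℂ) (hG : ∀ z : ℂ, G z = ∑' n : ℕ, z ^ n / (2 * n + 1))
    (P : ℂ → ℂ) (hP : ∀ z : ℂ, P z = 1 + ((8 / Real.pi ^ 2 : ℝ) : ℂ) * z * G z ^ 2)
    (Q : ℂ → ℂ) (hQ : ∀ z : ℂ, Q z = 2 * z * deriv P z + 1 - P z ^ 2) (n : ℕ) :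
    ∃ r : ℝ, 0 ≤ r ∧ iteratedDeriv n Q 0 = (r : ℂ) := by
  have hGf : G = Quc.GC := funext fun z => hG z
  have hPf : ∀ z, P z = 1 + (Quc.cR : ℂ) * Quc.SC z := by
    intro z
    rw [hP, hGf]
    rw [Quc.SC, Quc.cR]
    push_cast
    ring
  have hQf : ∀ z : ℂ, ‖z‖ < 4⁻¹ → Q z = Quc.ΦC (Quc.SC z) := by
    intro z hz
    have hz2 : ‖z‖ < 2⁻¹ := hz.trans (by norm_num)
    have hdP : deriv P z = (Quc.cR : ℂ) * deriv Quc.SC z := by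
      have hPfun : P = fun z => 1 + (Quc.cR : ℂ) * Quc.SC z := funext hPf
      rw [hPfun, deriv_const_add, deriv_const_mul _ (Quc.SC_diff hz2)]
    rw [hQ, hdP, hPf, Quc.ΦC_eq (Quc.SC_norm hz)]
    have hkey := Quc.key hz
    linear_combination (Quc.cR : ℂ) * hkey
  have hevq : (Quc.ΦC ∘ Quc.SC) =ᶠ[nhds (0:ℂ)] Q := by
    filter_upwards [Metric.ball_mem_nhds (0:ℂ) (by norm_num : (0:ℝ) < 4⁻¹)] with z hz
    rw [Metric.mem_ball, dist_zero_right] at hz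
    exact (hQf z hz).symm
  have hSat : HasFPowerSeriesAt Quc.SC Quc.pS 0 := ⟨_, Quc.hSball⟩
  have hΦat : HasFPowerSeriesAt Quc.ΦC Quc.pΦ (Quc.SC 0) := by
    rw [show Quc.SC 0 = 0 by simp [Quc.SC]]
    exact ⟨_, Quc.hΦball⟩
  have hcomp : HasFPowerSeriesAt (Quc.ΦC ∘ Quc.SC) (Quc.pΦ.comp Quc.pS) 0 := hΦat.comp hSat
  have hQat : HasFPowerSeriesAt Q (Quc.pΦ.comp Quc.pS) 0 := hcomp.congr hevq
  obtain ⟨R, hball⟩ := hQat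
  obtain ⟨r, hr0, hrc⟩ := Quc.comp_coeff n
  refine ⟨n ! * r, by positivity, ?_⟩
  have hfs := hball.factorial_smul (1 : ℂ) n
  rw [iteratedDeriv_eq_iteratedFDeriv, ← hfs, hrc, nsmul_eq_mul]
  push_cast
  try ring
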